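/- Let p be a probability measure on a measurable space, ε ≥ 0, and let μ₁, …, μ_N and ν₁, …, ν_N be probability measures, each absolutely continuous with respect to p, such that (1/N)·Σᵢ KL(μᵢ‖p) ≤ ε and (1/N)·Σᵢ KL(νᵢ‖p) ≤ ε. Then for every measurable set B, |(1/N)·Σᵢ (μᵢ(B) − νᵢ(B))| ≤ 2·√ε. -/

import Mathlib

open MeasureTheory
open scoped ENNReal Classical

/-- The Kullback–Leibler divergence `KL(μ‖ν) = ∫ log(dμ/dν) dμ`, taking the
value `∞` when `μ` is not absolutely continuous w.r.t. `ν` or the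
log-likelihood ratio is not integrable. -/
noncomputable def klDiv {Ω : Type*} [MeasurableSpace Ω] (μ ν : Measure Ω) : ℝ≥0∞ :=
  if μ ≪ ν ∧ Integrable (llr μ ν) μ then ENNReal.ofReal (∫ x, llr μ ν x ∂μ) else ⊤

lemma log_lb_le_one {x : ℝ} (hx0 : 0 < x) (hx1 : x ≤ 1) : x/2 - 1/(2*x) ≤ Real.log x := by
  set F : ℝ → ℝ := fun y => Real.log y - y/2 + 1/(2*y) with hF
  have key : AntitoneOn F (Set.Icc x 1) := by
    have hD : ∀ y ∈ interior (Set.Icc x 1), HasDerivAt F (1/y - 1/2 - 1/(2*y^2)) y := by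
      intro y hy
      rw [interior_Icc] at hy
      have hy0 : 0 < y := lt_trans hx0 hy.1
      have h1 : HasDerivAt (fun y : ℝ => Real.log y) (1/y) y := by
        simpa [one_div] using Real.hasDerivAt_log hy0.ne'
      have h2 : HasDerivAt (fun y : ℝ => y/2) (1/2) y := by
        simpa using (hasDerivAt_id y).div_const 2
      have h3 : HasDerivAt (fun y : ℝ => 1/(2*y)) (-(2)/(2*y)^2) y := by
        have : HasDerivAt (fun y : ℝ => 2*y) 2 y := by
          simpa using (hasDerivAt_id y).const_mul 2
        rw [show (fun y : ℝ => 1/(2*y)) = fun y => (2*y)⁻¹ from funext fun z => one_div _]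
        exact this.inv (by positivity)
      have := (h1.sub h2).add h3
      refine this.congr_deriv ?_
      ring
    have hcont : ContinuousOn F (Set.Icc x 1) := by
      intro y hy
      have hy0 : 0 < y := lt_of_lt_of_le hx0 hy.1
      exact (((Real.continuousAt_log hy0.ne').continuousWithinAt.sub
        (continuousWithinAt_id.div_const 2)).add
        ((continuousWithinAt_const.div ((continuousWithinAt_const.mul continuousWithinAt_id)) (by positivity))))
    refine antitoneOn_of_deriv_nonpos (convex_Icc x 1) hcont (fun y hy => (hD y hy).differentiableAt.differentiableWithinAt) ?_
    intro y hy
    rw [(hD y hy).deriv]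
    rw [interior_Icc] at hy
    have hy0 : 0 < y := lt_trans hx0 hy.1
    have h : 1/y - 1/2 - 1/(2*y^2) = -((y-1)^2/(2*y^2)) := by field_simp; ring
    rw [h]
    have : (0:ℝ) ≤ (y-1)^2/(2*y^2) := by positivity
    linarith
  have := key (Set.mem_Icc.2 ⟨le_refl x, hx1⟩) (Set.mem_Icc.2 ⟨hx1, le_refl 1⟩) hx1
  simp only [hF, Real.log_one] at this
  norm_num at this
  have h2 : x⁻¹ * (1/2) = 1/(2*x) := by field_simp
  linarith

lemma log_lb_ge_one {x : ℝ} (hx : 1 ≤ x) : 2 - 4/(x+1) ≤ Real.log x := by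
  set F : ℝ → ℝ := fun y => Real.log y - 2 + 4/(y+1) with hF
  have key : MonotoneOn F (Set.Icc 1 x) := by
    have hD : ∀ y ∈ interior (Set.Icc 1 x), HasDerivAt F (1/y - 4/(y+1)^2) y := by
      intro y hy
      rw [interior_Icc] at hy
      have hy0 : (0:ℝ) < y := lt_trans one_pos hy.1
      have h1 : HasDerivAt (fun y : ℝ => Real.log y) (1/y) y := by
        simpa [one_div] using Real.hasDerivAt_log hy0.ne'
      have h3 : HasDerivAt (fun y : ℝ => 4/(y+1)) (4 * (-(1)/(y+1)^2)) y := by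
        have h4 : HasDerivAt (fun y : ℝ => y+1) 1 y := by
          simpa using (hasDerivAt_id y).add_const 1
        rw [show (fun y : ℝ => 4/(y+1)) = fun y => 4 * (y+1)⁻¹ from funext fun z => div_eq_mul_inv _ _]
        exact (h4.inv (by positivity)).const_mul 4
      have := (h1.sub_const 2).add h3
      refine this.congr_deriv ?_
      ring
    have hcont : ContinuousOn F (Set.Icc 1 x) := by
      intro y hy
      have hy0 : (0:ℝ) < y := lt_of_lt_of_le one_pos hy.1
      exact (((Real.continuousAt_log hy0.ne').continuousWithinAt.sub
        continuousWithinAt_const).add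
        (continuousWithinAt_const.div (continuousWithinAt_id.add continuousWithinAt_const) (by positivity)))
    refine monotoneOn_of_deriv_nonneg (convex_Icc 1 x) hcont (fun y hy => (hD y hy).differentiableAt.differentiableWithinAt) ?_
    intro y hy
    rw [(hD y hy).deriv]
    rw [interior_Icc] at hy
    have hy1 : 1 < y := hy.1
    have h : 1/y - 4/(y+1)^2 = (y-1)^2/(y*(y+1)^2) := by field_simp; ring
    rw [h]
    positivity
  have := key (Set.mem_Icc.2 ⟨le_refl 1, hx⟩) (Set.mem_Icc.2 ⟨hx, le_refl x⟩) hx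
  simp only [hF, Real.log_one] at this
  norm_num at this
  linarith

lemma quad_le_kl (x : ℝ) (hx : 0 ≤ x) : (x-1)^2 ≤ 2*(x+1)*(x*Real.log x - x + 1) := by
  rcases eq_or_lt_of_le hx with h0 | h0
  · simp [← h0]
  rcases le_total x 1 with h1 | h1
  · have := log_lb_le_one h0 h1
    have hxl : x * Real.log x ≥ x * (x/2 - 1/(2*x)) := by
      exact mul_le_mul_of_nonneg_left this hx
    have hx2 : x * (x/2 - 1/(2*x)) = x^2/2 - 1/2 := by field_simp
    nlinarith [sq_nonneg (x-1), sq_nonneg (x+1)]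
  · have := log_lb_ge_one h1
    have hxl : x * Real.log x ≥ x * (2 - 4/(x+1)) := by
      exact mul_le_mul_of_nonneg_left this hx
    have hx2 : x * (2 - 4/(x+1)) = 2*x - 4*x/(x+1) := by ring
    have hpos : (0:ℝ) < x + 1 := by linarith
    have key : 2*(x+1)*(x*(2-4/(x+1)) - x + 1) = 2*(x-1)^2 := by field_simp; ring
    nlinarith [sq_nonneg (x-1)]

lemma pinsker_aux {Ω : Type*} [MeasurableSpace Ω] {p μ : Measure Ω}
    [IsProbabilityMeasure p] [IsProbabilityMeasure μ]
    (hac : μ ≪ p) (hint : Integrable (llr μ p) μ) :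
    0 ≤ ∫ x, llr μ p x ∂μ ∧ ∀ B : Set Ω, MeasurableSet B →
      |(μ B).toReal - (p B).toReal| ≤ Real.sqrt (∫ x, llr μ p x ∂μ) := by
  set f : Ω → ℝ := fun x => (μ.rnDeriv p x).toReal with hf
  have hfm : Measurable f := (Measure.measurable_rnDeriv μ p).ennreal_toReal
  have hf0 : ∀ x, 0 ≤ f x := fun x => ENNReal.toReal_nonneg
  have hfint : Integrable f p := Measure.integrable_toReal_rnDeriv
  have hf1 : ∫ x, f x ∂p = 1 := by
    rw [Measure.integral_toReal_rnDeriv hac]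
    simp
  have hgint : Integrable (fun x => f x * Real.log (f x)) p := by
    have := (MeasureTheory.integrable_rnDeriv_smul_iff hac).2 hint
    simpa [llr, hf] using this
  have hKeq : ∫ x, llr μ p x ∂μ = ∫ x, f x * Real.log (f x) ∂p := by
    rw [← MeasureTheory.integral_rnDeriv_smul (f := llr μ p) hac]
    simp [llr, hf]
  set K := ∫ x, f x * Real.log (f x) ∂p with hK
  set G : Ω → ℝ := fun x => f x * Real.log (f x) - f x + 1 with hG
  have hGint : Integrable G p := (hgint.sub hfint).add (integrable_const 1)
  have hGnonneg : ∀ x, 0 ≤ G x := by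
    intro x
    have hGx : G x = f x * Real.log (f x) - f x + 1 := rfl
    rw [hGx]
    have := quad_le_kl (f x) (hf0 x)
    nlinarith [sq_nonneg (f x - 1), hf0 x]
  have hGval : ∫ x, G x ∂p = K := by
    have h1 : Integrable (fun x => f x * Real.log (f x) - f x) p := hgint.sub hfint
    have e : ∫ x, G x ∂p = ∫ x, (f x * Real.log (f x) - f x) + 1 ∂p := rfl
    rw [e, integral_add h1 (integrable_const 1), integral_sub hgint hfint, hf1]
    simp [hK]
  have hK0 : 0 ≤ K := by
    rw [← hGval]
    exact integral_nonneg hGnonneg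
  -- Cauchy–Schwarz step
  set u : Ω → ℝ := fun x => |f x - 1| / Real.sqrt (f x + 1) with hu
  set v : Ω → ℝ := fun x => Real.sqrt (f x + 1) with hv
  have hum : Measurable u := ((hfm.sub measurable_const).abs.div ((hfm.add_const 1).sqrt))
  have hvm : Measurable v := (hfm.add_const 1).sqrt
  have hfp1 : ∀ x, (0:ℝ) < f x + 1 := fun x => by have := hf0 x; linarith
  have huv : ∀ x, u x * v x = |f x - 1| := by
    intro x
    rw [hu, hv]
    simp only
    rw [div_mul_cancel₀]
    exact (Real.sqrt_pos.2 (hfp1 x)).ne'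
  have hu2 : ∀ x, u x ^ 2 = (f x - 1)^2 / (f x + 1) := by
    intro x
    rw [hu]
    simp only
    rw [div_pow, sq_abs, Real.sq_sqrt (hfp1 x).le]
  have hv2 : ∀ x, v x ^ 2 = f x + 1 := fun x => Real.sq_sqrt (hfp1 x).le
  have hu2le : ∀ x, u x ^ 2 ≤ 2 * G x := by
    intro x
    rw [hu2]
    rw [div_le_iff₀ (hfp1 x)]
    have hGx : G x = f x * Real.log (f x) - f x + 1 := rfl
    rw [hGx]
    have := quad_le_kl (f x) (hf0 x)
    linarith
  have hu2int : Integrable (fun x => u x ^ 2) p := by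
    refine Integrable.mono' (hGint.const_mul 2) ((hum.pow_const 2).aestronglyMeasurable) ?_
    refine Filter.Eventually.of_forall fun x => ?_
    rw [Real.norm_of_nonneg (sq_nonneg _)]
    exact hu2le x
  have hv2int : Integrable (fun x => v x ^ 2) p := by
    simp only [hv2]
    exact hfint.add (integrable_const 1)
  have huL2 : MemLp u 2 p := (memLp_two_iff_integrable_sq hum.aestronglyMeasurable).2 hu2int
  have hvL2 : MemLp v 2 p := (memLp_two_iff_integrable_sq hvm.aestronglyMeasurable).2 hv2int
  have hconj : (2:ℝ).HolderConjugate 2 := by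
    rw [Real.holderConjugate_iff]; constructor <;> norm_num
  have hCS := integral_mul_le_Lp_mul_Lq_of_nonneg hconj
    (Filter.Eventually.of_forall fun x => div_nonneg (abs_nonneg _) (Real.sqrt_nonneg _))
    (Filter.Eventually.of_forall fun x => Real.sqrt_nonneg _)
    (by rw [show ENNReal.ofReal (2:ℝ) = 2 by norm_num]; exact huL2)
    (by rw [show ENNReal.ofReal (2:ℝ) = 2 by norm_num]; exact hvL2)
  have habsint : Integrable (fun x => |f x - 1|) p := (hfint.sub (integrable_const 1)).abs
  have hrw2 : ∀ g : Ω → ℝ, (∀ x, 0 ≤ g x) → ∫ x, g x ^ (2:ℝ) ∂p = ∫ x, g x ^ 2 ∂p := by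
    intro g hg
    refine integral_congr_ae (Filter.Eventually.of_forall fun x => ?_)
    show g x ^ (2:ℝ) = g x ^ (2:ℕ)
    rw [← Real.rpow_natCast (g x) 2]
    norm_num
  rw [hrw2 u (fun x => by positivity), hrw2 v (fun x => Real.sqrt_nonneg _)] at hCS
  have hCS2 : ∫ x, |f x - 1| ∂p ≤ Real.sqrt (2 * K) * Real.sqrt 2 := by
    have h1 : ∫ x, u x * v x ∂p = ∫ x, |f x - 1| ∂p :=
      integral_congr_ae (Filter.Eventually.of_forall fun x => huv x)
    have h2 : ∫ x, u x ^ 2 ∂p ≤ 2 * K := by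
      calc ∫ x, u x ^ 2 ∂p ≤ ∫ x, 2 * G x ∂p :=
            integral_mono hu2int (hGint.const_mul 2) hu2le
        _ = 2 * K := by rw [integral_const_mul, hGval]
      
    have h3 : ∫ x, v x ^ 2 ∂p = 2 := by
      simp only [hv2]
      rw [integral_add hfint (integrable_const 1), hf1]
      simp
      norm_num
    rw [h1, h3] at hCS
    refine hCS.trans ?_
    have e1 : (∫ x, u x ^ 2 ∂p) ^ ((1:ℝ)/2) = Real.sqrt (∫ x, u x ^ 2 ∂p) := by
      rw [Real.sqrt_eq_rpow]
    have e2 : (2:ℝ) ^ ((1:ℝ)/2) = Real.sqrt 2 := by rw [Real.sqrt_eq_rpow]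
    rw [e1, e2]
    gcongr
  have hfinal : ∫ x, |f x - 1| ∂p ≤ 2 * Real.sqrt K := by
    refine hCS2.trans_eq ?_
    rw [← Real.sqrt_mul (by positivity)]
    rw [show (2:ℝ) * K * 2 = 4 * K by ring]
    rw [show (4:ℝ) * K = 2^2 * K by norm_num]
    rw [Real.sqrt_mul (by positivity), Real.sqrt_sq (by norm_num)]
  rw [hKeq]
  refine ⟨hK0, fun B hB => ?_⟩
  -- set difference as integrals
  have hμB : (μ B).toReal = ∫ x in B, f x ∂p := (Measure.setIntegral_toReal_rnDeriv hac B).symm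
  have hpB : (p B).toReal = ∫ x in B, (1:ℝ) ∂p := by simp [Measure.real]
  have hdiff : ∀ S : Set Ω, MeasurableSet S →
      (μ S).toReal - (p S).toReal = ∫ x in S, (f x - 1) ∂p := by
    intro S hS
    rw [integral_sub (hfint.restrict) (integrable_const 1),
      Measure.setIntegral_toReal_rnDeriv hac S]
    simp [Measure.real]
  have hcompl : (μ Bᶜ).toReal - (p Bᶜ).toReal = -((μ B).toReal - (p B).toReal) := by
    have h1 : (μ Bᶜ).toReal = 1 - (μ B).toReal := by
      rw [measure_compl hB (measure_ne_top μ B), measure_univ]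
      rw [ENNReal.toReal_sub_of_le (prob_le_one) (by simp)]
      simp
    have h2 : (p Bᶜ).toReal = 1 - (p B).toReal := by
      rw [measure_compl hB (measure_ne_top p B), measure_univ]
      rw [ENNReal.toReal_sub_of_le (prob_le_one) (by simp)]
      simp
    rw [h1, h2]; ring
  have hbound : 2 * |(μ B).toReal - (p B).toReal| ≤ ∫ x, |f x - 1| ∂p := by
    have hB1 : |(μ B).toReal - (p B).toReal| ≤ ∫ x in B, |f x - 1| ∂p := by
      rw [hdiff B hB]
      have := norm_integral_le_integral_norm (μ := p.restrict B) (fun x => f x - 1)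
      simpa [Real.norm_eq_abs] using this
    have hB2 : |(μ B).toReal - (p B).toReal| ≤ ∫ x in Bᶜ, |f x - 1| ∂p := by
      rw [← abs_neg, ← hcompl, hdiff Bᶜ hB.compl]
      have := norm_integral_le_integral_norm (μ := p.restrict Bᶜ) (fun x => f x - 1)
      simpa [Real.norm_eq_abs] using this
    have hsplit : ∫ x in B, |f x - 1| ∂p + ∫ x in Bᶜ, |f x - 1| ∂p = ∫ x, |f x - 1| ∂p :=
      integral_add_compl hB habsint
    linarith
  have := hbound.trans hfinal
  linarith

lemma family_bound {Ω : Type*} [MeasurableSpace Ω]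
    (p : Measure Ω) [IsProbabilityMeasure p] (ε : ℝ) (hε : 0 ≤ ε)
    (N : ℕ) (hN : 0 < N) (μ : Fin N → Measure Ω)
    [∀ i, IsProbabilityMeasure (μ i)]
    (hμa : ∀ i, μ i ≪ p)
    (hμ : (N : ℝ≥0∞)⁻¹ * ∑ i, klDiv (μ i) p ≤ ENNReal.ofReal ε)
    (B : Set Ω) (hB : MeasurableSet B) :
    ∑ i, |(μ i B).toReal - (p B).toReal| ≤ N * Real.sqrt ε := by
  have hNne : (N : ℝ≥0∞) ≠ 0 := by
    simp [hN.ne']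
  have hNtop : (N : ℝ≥0∞) ≠ ⊤ := ENNReal.natCast_ne_top N
  have hfin : ∀ i, klDiv (μ i) p ≠ ⊤ := by
    intro i hi
    have hsum : ∑ i, klDiv (μ i) p = ⊤ :=
      ENNReal.sum_eq_top.2 ⟨i, Finset.mem_univ i, hi⟩
    rw [hsum, ENNReal.mul_top (ENNReal.inv_ne_zero.2 hNtop)] at hμ
    exact (ENNReal.ofReal_ne_top (top_le_iff.1 hμ)).elim
  have hint : ∀ i, Integrable (llr (μ i) p) (μ i) := by
    intro i
    by_contra h
    exact hfin i (by simp [klDiv, hμa i, h])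
  set Ki : Fin N → ℝ := fun i => ∫ x, llr (μ i) p x ∂(μ i) with hKi
  have hpa := fun i => pinsker_aux (hμa i) (hint i)
  have hK0 : ∀ i, 0 ≤ Ki i := fun i => (hpa i).1
  have hKb : ∀ i, |(μ i B).toReal - (p B).toReal| ≤ Real.sqrt (Ki i) :=
    fun i => (hpa i).2 B hB
  have hklval : ∀ i, klDiv (μ i) p = ENNReal.ofReal (Ki i) := by
    intro i
    simp [klDiv, hμa i, hint i, hKi]
  have hsumK : ∑ i, Ki i ≤ N * ε := by
    have h1 : ∑ i, klDiv (μ i) p ≤ (N : ℝ≥0∞) * ENNReal.ofReal ε := by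
      calc ∑ i, klDiv (μ i) p
          = (N : ℝ≥0∞) * ((N : ℝ≥0∞)⁻¹ * ∑ i, klDiv (μ i) p) := by
            rw [← mul_assoc, ENNReal.mul_inv_cancel hNne hNtop, one_mul]
        _ ≤ (N : ℝ≥0∞) * ENNReal.ofReal ε := by gcongr
    have h2 : ∑ i, klDiv (μ i) p = ENNReal.ofReal (∑ i, Ki i) := by
      rw [ENNReal.ofReal_sum_of_nonneg (fun i _ => hK0 i)]
      exact Finset.sum_congr rfl fun i _ => hklval i
    have h3 : (N : ℝ≥0∞) * ENNReal.ofReal ε = ENNReal.ofReal (N * ε) := by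
      rw [ENNReal.ofReal_mul (by positivity)]
      congr 1
      simp
    rw [h2, h3] at h1
    exact (ENNReal.ofReal_le_ofReal_iff (by positivity)).1 h1
  have hCS : ∑ i, Real.sqrt (Ki i) ≤ N * Real.sqrt ε := by
    have hsq : (∑ i, Real.sqrt (Ki i))^2 ≤ (N : ℝ) * ∑ i, Ki i := by
      have := sq_sum_le_card_mul_sum_sq (s := (Finset.univ : Finset (Fin N)))
        (f := fun i => Real.sqrt (Ki i))
      simpa [Real.sq_sqrt, hK0, Finset.card_univ] using this
    have hsq2 : (∑ i, Real.sqrt (Ki i))^2 ≤ ((N : ℝ) * Real.sqrt ε)^2 := by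
      have h4 : ((N : ℝ) * Real.sqrt ε)^2 = (N:ℝ) * ((N:ℝ) * ε) := by
        rw [mul_pow, Real.sq_sqrt hε]; ring
      rw [h4]
      refine hsq.trans ?_
      have : (0:ℝ) ≤ (N:ℝ) := by positivity
      nlinarith [hsumK]
    have hnn : 0 ≤ ∑ i, Real.sqrt (Ki i) :=
      Finset.sum_nonneg fun i _ => Real.sqrt_nonneg _
    have hnn2 : 0 ≤ (N : ℝ) * Real.sqrt ε := by positivity
    nlinarith
  calc ∑ i, |(μ i B).toReal - (p B).toReal| ≤ ∑ i, Real.sqrt (Ki i) :=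
        Finset.sum_le_sum fun i _ => hKb i
    _ ≤ N * Real.sqrt ε := hCS


/-- **Closeness of averaged encoder outputs of two VAEs (Lemma on encoder
weights).** If two families of encoding distributions μ₁,…,μ_N and ν₁,…,ν_N
each have average KL divergence to the prior p at most ε, then for every
measurable set B: |(1/N)·Σᵢ (μᵢ(B) − νᵢ(B))| ≤ 2√ε. -/
theorem avg_encoder_diff_le {Ω : Type*} [MeasurableSpace Ω]
    (p : Measure Ω) [IsProbabilityMeasure p] (ε : ℝ) (hε : 0 ≤ ε)
    (N : ℕ) (hN : 0 < N) (μ ν : Fin N → Measure Ω)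
    [∀ i, IsProbabilityMeasure (μ i)] [∀ i, IsProbabilityMeasure (ν i)]
    (hμa : ∀ i, μ i ≪ p) (hνa : ∀ i, ν i ≪ p)
    (hμ : (N : ℝ≥0∞)⁻¹ * ∑ i, klDiv (μ i) p ≤ ENNReal.ofReal ε)
    (hν : (N : ℝ≥0∞)⁻¹ * ∑ i, klDiv (ν i) p ≤ ENNReal.ofReal ε) :
    ∀ B : Set Ω, MeasurableSet B →
      |(N : ℝ)⁻¹ * ∑ i, ((μ i B).toReal - (ν i B).toReal)| ≤
        2 * Real.sqrt ε := by
  intro B hB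
  have h1 := family_bound p ε hε N hN μ hμa hμ B hB
  have h2 := family_bound p ε hε N hN ν hνa hν B hB
  have habs : |∑ i, ((μ i B).toReal - (ν i B).toReal)| ≤
      (∑ i, |(μ i B).toReal - (p B).toReal|) + ∑ i, |(ν i B).toReal - (p B).toReal| := by
    calc |∑ i, ((μ i B).toReal - (ν i B).toReal)|
        ≤ ∑ i, |(μ i B).toReal - (ν i B).toReal| := Finset.abs_sum_le_sum_abs _ _
      _ ≤ ∑ i, (|(μ i B).toReal - (p B).toReal| + |(ν i B).toReal - (p B).toReal|) := by
          refine Finset.sum_le_sum fun i _ => ?_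
          have := abs_sub_le ((μ i B).toReal) ((p B).toReal) ((ν i B).toReal)
          have h := abs_sub_comm ((p B).toReal) ((ν i B).toReal)
          linarith
      _ = _ := Finset.sum_add_distrib
  have hNpos : (0:ℝ) < N := by exact_mod_cast hN
  rw [abs_mul, abs_of_nonneg (by positivity : (0:ℝ) ≤ (N:ℝ)⁻¹)]
  have : |∑ i, ((μ i B).toReal - (ν i B).toReal)| ≤ 2 * N * Real.sqrt ε := by
    linarith
  calc (N:ℝ)⁻¹ * |∑ i, ((μ i B).toReal - (ν i B).toReal)|
      ≤ (N:ℝ)⁻¹ * (2 * N * Real.sqrt ε) := by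
        exact mul_le_mul_of_nonneg_left this (by positivity)
    _ = 2 * Real.sqrt ε := by field_simp
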